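/- For A ∈ M_d(ℝ) regarded as an operator on ℓ₁^d, the 1-nuclear norm is given by ν₁(A) = Σ_{i=1}^d max_j |a_{ij}|. -/

import Mathlib

noncomputable section

/-- The operator on the `d`-dimensional Banach space `F` (identified with `ℝ^d` via the
linear equivalence `φ`) induced by a `d × d` matrix `A`. -/
def matOp (d : ℕ) (F : Type) [NormedAddCommGroup F] [NormedSpace ℝ F]
    [FiniteDimensional ℝ F] (φ : F ≃ₗ[ℝ] (Fin d → ℝ))
    (A : Matrix (Fin d) (Fin d) ℝ) : F →L[ℝ] F :=
  LinearMap.toContinuousLinearMap ((φ.symm.toLinearMap ∘ₗ A.mulVecLin) ∘ₗ φ.toLinearMap)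

/-- The 1-nuclear norm `ν₁(A)` of a matrix `A` acting on the Banach space `F`:
the infimum of `Σ ‖f_i‖_{F*}·‖x_i‖_F` over all rank-one decompositions
`A = Σ f_i ⊗ x_i`. -/
def nuclearNorm (d : ℕ) (F : Type) [NormedAddCommGroup F] [NormedSpace ℝ F]
    [FiniteDimensional ℝ F] (φ : F ≃ₗ[ℝ] (Fin d → ℝ))
    (A : Matrix (Fin d) (Fin d) ℝ) : ℝ :=
  sInf {c : ℝ | ∃ (m : ℕ) (g : Fin m → StrongDual ℝ F) (x : Fin m → F),
    (∀ v : F, matOp d F φ A v = ∑ i, g i v • x i) ∧ c = ∑ i, ‖g i‖ * ‖x i‖}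

end

noncomputable section aux

variable {d : ℕ}

lemma L1norm (v : PiLp 1 (fun _ : Fin d => ℝ)) : ‖v‖ = ∑ j, |v j| := by
  rw [PiLp.norm_eq_sum (by norm_num)]
  simp [Real.norm_eq_abs]

def ee (d : ℕ) (j : Fin d) : PiLp 1 (fun _ : Fin d => ℝ) :=
  (WithLp.equiv 1 (Fin d → ℝ)).symm (Pi.single j 1)

lemma ee_apply (j l : Fin d) : ee d j l = if l = j then 1 else 0 := by
  simp [ee, Pi.single_apply]

lemma ee_norm (j : Fin d) : ‖ee d j‖ = 1 := by
  rw [L1norm]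
  simp [ee_apply, apply_ite abs, Finset.sum_ite_eq]

lemma matOp_apply (A : Matrix (Fin d) (Fin d) ℝ) (v : PiLp 1 (fun _ : Fin d => ℝ)) (i : Fin d) :
    matOp d (PiLp 1 (fun _ : Fin d => ℝ)) (WithLp.linearEquiv 1 ℝ (Fin d → ℝ)) A v i
      = ∑ j, A i j * v j := by
  simp [matOp, Matrix.mulVecLin, Matrix.mulVec, dotProduct]

def rowCLM (d : ℕ) (A : Matrix (Fin d) (Fin d) ℝ) (i : Fin d) :
    StrongDual ℝ (PiLp 1 (fun _ : Fin d => ℝ)) :=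
  LinearMap.toContinuousLinearMap
    { toFun := fun v => ∑ j, A i j * v j
      map_add' := by
        intro x y
        simp [mul_add, Finset.sum_add_distrib]
      map_smul' := by
        intro c x
        simp [Finset.mul_sum]
        ring_nf
        simp [mul_comm, mul_left_comm] }

lemma rowCLM_apply (A : Matrix (Fin d) (Fin d) ℝ) (i : Fin d)
    (v : PiLp 1 (fun _ : Fin d => ℝ)) : rowCLM d A i v = ∑ j, A i j * v j := rfl

end aux

noncomputable section aux2
variable {d : ℕ}

lemma piLp_sum_apply {m : ℕ} (w : Fin m → PiLp 1 (fun _ : Fin d => ℝ)) (i : Fin d) :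
    (∑ k, w k) i = ∑ k, w k i := by
  have h := map_sum (WithLp.linearEquiv 1 ℝ (Fin d → ℝ)) w Finset.univ
  calc (∑ k, w k) i = (WithLp.linearEquiv 1 ℝ (Fin d → ℝ) (∑ k, w k)) i := rfl
    _ = (∑ k, WithLp.linearEquiv 1 ℝ (Fin d → ℝ) (w k)) i := by rw [h]
    _ = ∑ k, w k i := by rw [Finset.sum_apply]; rfl

lemma rowCLM_norm_le (A : Matrix (Fin d) (Fin d) ℝ) (i : Fin d) :
    ‖rowCLM d A i‖ ≤ ⨆ j, |A i j| := by
  have : Nonempty (Fin d) := ⟨i⟩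
  have hbdd : BddAbove (Set.range fun j => |A i j|) := Set.Finite.bddAbove (Set.finite_range _)
  have hnn : 0 ≤ ⨆ j, |A i j| := (abs_nonneg _).trans (le_ciSup hbdd i)
  apply ContinuousLinearMap.opNorm_le_bound _ hnn
  intro v
  rw [rowCLM_apply, L1norm, Real.norm_eq_abs, Finset.mul_sum]
  calc |∑ j, A i j * v j| ≤ ∑ j, |A i j * v j| := Finset.abs_sum_le_sum_abs _ _
    _ ≤ ∑ j, (⨆ j', |A i j'|) * |v j| := by
        refine Finset.sum_le_sum fun j _ => ?_
        rw [abs_mul]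
        exact mul_le_mul_of_nonneg_right (le_ciSup hbdd j) (abs_nonneg _)

end aux2


/-- for a matrix `A` regarded as an operator on `ℓ₁^d`, the 1-nuclear
norm is `ν₁(A) = Σ_i max_j |a_{ij}|`. -/
theorem nuclearNorm_l1 (d : ℕ) (A : Matrix (Fin d) (Fin d) ℝ) :
    nuclearNorm d (PiLp 1 (fun _ : Fin d => ℝ))
        (WithLp.linearEquiv 1 ℝ (Fin d → ℝ)) A =
      ∑ i : Fin d, ⨆ j : Fin d, |A i j| := by
  classical
  unfold nuclearNorm
  -- lower bound
  have hlow : ∀ c ∈ {c : ℝ | ∃ (m : ℕ)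
      (g : Fin m → StrongDual ℝ (PiLp 1 (fun _ : Fin d => ℝ)))
      (x : Fin m → PiLp 1 (fun _ : Fin d => ℝ)),
      (∀ v, matOp d (PiLp 1 (fun _ : Fin d => ℝ)) (WithLp.linearEquiv 1 ℝ (Fin d → ℝ)) A v
        = ∑ i, g i v • x i) ∧ c = ∑ i, ‖g i‖ * ‖x i‖},
      (∑ i : Fin d, ⨆ j : Fin d, |A i j|) ≤ c := by
    rintro c ⟨m, g, x, hrep, rfl⟩
    have key : ∀ j i : Fin d, A i j = ∑ k, g k (ee d j) * x k i := by
      intro j i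
      have h : matOp d (PiLp 1 (fun _ : Fin d => ℝ)) (WithLp.linearEquiv 1 ℝ (Fin d → ℝ)) A
          (ee d j) i = (∑ k, g k (ee d j) • x k) i := by rw [hrep]
      rw [matOp_apply, piLp_sum_apply] at h
      simpa [ee_apply, mul_ite, Finset.sum_ite_eq'] using h
    have hrow : ∀ i : Fin d, (⨆ j, |A i j|) ≤ ∑ k, ‖g k‖ * |x k i| := by
      intro i
      have : Nonempty (Fin d) := ⟨i⟩
      apply ciSup_le
      intro j
      rw [key j i]
      calc |∑ k, g k (ee d j) * x k i| ≤ ∑ k, |g k (ee d j) * x k i| :=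
            Finset.abs_sum_le_sum_abs _ _
        _ ≤ ∑ k, ‖g k‖ * |x k i| := by
            refine Finset.sum_le_sum fun k _ => ?_
            rw [abs_mul]
            refine mul_le_mul_of_nonneg_right ?_ (abs_nonneg _)
            have := (g k).le_opNorm (ee d j)
            rwa [ee_norm, mul_one, Real.norm_eq_abs] at this
    calc ∑ i : Fin d, ⨆ j : Fin d, |A i j| ≤ ∑ i : Fin d, ∑ k, ‖g k‖ * |x k i| :=
          Finset.sum_le_sum fun i _ => hrow i
      _ = ∑ k, ∑ i : Fin d, ‖g k‖ * |x k i| := Finset.sum_comm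
      _ = ∑ k, ‖g k‖ * ‖x k‖ := by
          refine Finset.sum_congr rfl fun k _ => ?_
          rw [L1norm, Finset.mul_sum]
  -- membership of the explicit decomposition
  have hmem : (∑ i : Fin d, ‖rowCLM d A i‖ * ‖ee d i‖) ∈ {c : ℝ | ∃ (m : ℕ)
      (g : Fin m → StrongDual ℝ (PiLp 1 (fun _ : Fin d => ℝ)))
      (x : Fin m → PiLp 1 (fun _ : Fin d => ℝ)),
      (∀ v, matOp d (PiLp 1 (fun _ : Fin d => ℝ)) (WithLp.linearEquiv 1 ℝ (Fin d → ℝ)) A v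
        = ∑ i, g i v • x i) ∧ c = ∑ i, ‖g i‖ * ‖x i‖} := by
    refine ⟨d, rowCLM d A, ee d, fun v => ?_, rfl⟩
    refine PiLp.ext fun l => ?_
    rw [matOp_apply, piLp_sum_apply]
    have hsm : ∀ (c : ℝ) (w : PiLp 1 (fun _ : Fin d => ℝ)), (c • w) l = c * w l :=
      fun _ _ => rfl
    simp only [hsm, ee_apply, mul_ite, mul_one, mul_zero, Finset.sum_ite_eq, Finset.sum_ite_eq', Finset.mem_univ,
      if_true, rowCLM_apply]
  have hle : (∑ i : Fin d, ‖rowCLM d A i‖ * ‖ee d i‖) ≤ ∑ i : Fin d, ⨆ j : Fin d, |A i j| := by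
    refine Finset.sum_le_sum fun i _ => ?_
    rw [ee_norm, mul_one]
    exact rowCLM_norm_le A i
  exact le_antisymm ((csInf_le ⟨_, fun c hc => hlow c hc⟩ hmem).trans hle)
    (le_csInf ⟨_, hmem⟩ hlow)
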